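/- Let U be a finite set, ℓ an integer with 1 ≤ ℓ < |U|, and 𝓕 a family of ℓ-element subsets of U, considered along a sequence of instances in which |𝓕| and |U| tend to infinity. Suppose there exists a constant c > 0 such that for every instance, ∑_{k=1}^{ℓ−1} c^k · |𝓕|^{k/ℓ} · |I_k(𝓕)| ≤ |𝓕|². Then |𝓕|^{−1/ℓ} is a threshold function for the event Γ that the random subset X contains at least one element of 𝓕; that is, Pr[Γ] → 0 whenever θ = o(|𝓕|^{−1/ℓ}) and Pr[Γ] → 1 whenever θ = ω(|𝓕|^{−1/ℓ}), as |𝓕| → ∞. -/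

import Mathlib

open Filter Asymptotics

noncomputable def prRandomSubset {α : Type*} (U : Finset α) (θ : ℝ)
    (E : Finset α → Prop) : ℝ :=
  ∑ A ∈ U.powerset,
    @ite ℝ (E A) (Classical.propDecidable _)
      (θ ^ A.card * (1 - θ) ^ (U.card - A.card)) 0

def interPairs {α : Type*} [DecidableEq α] (F : Finset (Finset α)) (k : ℕ) :
    Finset (Finset α × Finset α) :=
  (F ×ˢ F).filter fun p => (p.1 ∩ p.2).card = k

section Helpers

open Finset

variable {α : Type*} [DecidableEq α]

lemma sum_binom (V : Finset α) (θ : ℝ) :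
    ∑ A ∈ V.powerset, θ ^ A.card * (1 - θ) ^ (V.card - A.card) = 1 := by
  have h := Finset.prod_add (fun _ : α => θ) (fun _ : α => 1 - θ) V
  simp only [add_sub_cancel, prod_const, one_pow] at h
  refine Eq.trans ?_ h.symm
  exact Finset.sum_congr rfl fun A hA => by
    rw [Finset.card_sdiff_of_subset (Finset.mem_powerset.mp hA)]

lemma E_ind (U S : Finset α) (θ : ℝ) (hS : S ⊆ U) :
    ∑ A ∈ U.powerset, (θ ^ A.card * (1 - θ) ^ (U.card - A.card)) *
      (if S ⊆ A then (1:ℝ) else 0) = θ ^ S.card := by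
  classical
  simp only [mul_ite, mul_one, mul_zero]
  rw [← Finset.sum_filter]
  rw [Finset.sum_nbij' (i := fun A => A \ S) (j := fun B => B ∪ S)
    (t := (U \ S).powerset)
    (g := fun B => θ ^ S.card * (θ ^ B.card * (1 - θ) ^ ((U \ S).card - B.card)))]
  · rw [← Finset.mul_sum, sum_binom, mul_one]
  · intro A hA
    simp only [Finset.mem_filter, Finset.mem_powerset] at hA
    exact Finset.mem_powerset.mpr (Finset.sdiff_subset_sdiff hA.1 le_rfl)
  · intro B hB
    simp only [Finset.mem_powerset] at hB
    simp only [Finset.mem_filter, Finset.mem_powerset]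
    exact ⟨Finset.union_subset (hB.trans Finset.sdiff_subset) hS, Finset.subset_union_right⟩
  · intro A hA
    simp only [Finset.mem_filter, Finset.mem_powerset] at hA
    exact Finset.sdiff_union_of_subset hA.2
  · intro B hB
    simp only [Finset.mem_powerset] at hB
    exact Finset.union_sdiff_cancel_right
      (Finset.disjoint_right.mpr fun a haS haB => (Finset.mem_sdiff.mp (hB haB)).2 haS)
  · intro A hA
    simp only [Finset.mem_filter, Finset.mem_powerset] at hA
    have h1 : (A \ S).card = A.card - S.card := Finset.card_sdiff_of_subset hA.2
    have h2 : (U \ S).card = U.card - S.card := Finset.card_sdiff_of_subset hS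
    have h3 : S.card ≤ A.card := Finset.card_le_card hA.2
    have h4 : A.card ≤ U.card := Finset.card_le_card hA.1
    rw [h1, h2, ← mul_assoc, ← pow_add]
    congr 2 <;> omega

lemma EZ_eq (U : Finset α) (F : Finset (Finset α)) (ℓ : ℕ) (θ : ℝ)
    (hF : ∀ S ∈ F, S ⊆ U ∧ S.card = ℓ) :
    ∑ A ∈ U.powerset, (θ ^ A.card * (1 - θ) ^ (U.card - A.card)) *
      (∑ S ∈ F, if S ⊆ A then (1:ℝ) else 0) = F.card * θ ^ ℓ := by
  classical
  simp_rw [Finset.mul_sum]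
  rw [Finset.sum_comm]
  have h : ∀ S ∈ F, ∑ A ∈ U.powerset, (θ ^ A.card * (1-θ) ^ (U.card - A.card)) *
      (if S ⊆ A then (1:ℝ) else 0) = θ ^ ℓ := fun S hS => by
    rw [E_ind U S θ (hF S hS).1, (hF S hS).2]
  rw [Finset.sum_congr rfl h, Finset.sum_const, nsmul_eq_mul]

lemma EZsq_eq (U : Finset α) (F : Finset (Finset α)) (ℓ : ℕ) (θ : ℝ)
    (hF : ∀ S ∈ F, S ⊆ U ∧ S.card = ℓ) :
    ∑ A ∈ U.powerset, (θ ^ A.card * (1 - θ) ^ (U.card - A.card)) *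
      (∑ S ∈ F, if S ⊆ A then (1:ℝ) else 0) ^ 2
    = ∑ k ∈ Finset.range (ℓ+1), ((interPairs F k).card : ℝ) * θ ^ (2*ℓ - k) := by
  classical
  have hZ : ∀ A : Finset α, (∑ S ∈ F, if S ⊆ A then (1:ℝ) else 0) ^ 2
      = ∑ p ∈ F ×ˢ F, (if p.1 ∪ p.2 ⊆ A then (1:ℝ) else 0) := by
    intro A
    rw [sq, Finset.sum_mul_sum, ← Finset.sum_product']
    refine Finset.sum_congr rfl fun p _ => ?_
    by_cases h1 : p.1 ⊆ A <;> by_cases h2 : p.2 ⊆ A <;>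
      simp [h1, h2, Finset.union_subset_iff]
  simp_rw [hZ, Finset.mul_sum]
  rw [Finset.sum_comm]
  have step : ∀ p ∈ F ×ˢ F, ∑ A ∈ U.powerset, (θ ^ A.card * (1-θ) ^ (U.card - A.card)) *
      (if p.1 ∪ p.2 ⊆ A then (1:ℝ) else 0) = θ ^ (p.1 ∪ p.2).card := fun p hp => by
    rw [Finset.mem_product] at hp
    exact E_ind U _ θ (Finset.union_subset (hF _ hp.1).1 (hF _ hp.2).1)
  rw [Finset.sum_congr rfl step]
  have hmaps : ∀ p ∈ F ×ˢ F, (p.1 ∩ p.2).card ∈ Finset.range (ℓ+1) := by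
    intro p hp
    rw [Finset.mem_product] at hp
    rw [Finset.mem_range]
    have h1 := Finset.card_le_card (Finset.inter_subset_left (s₁ := p.1) (s₂ := p.2))
    have h2 := (hF _ hp.1).2
    omega
  rw [← Finset.sum_fiberwise_of_maps_to hmaps (fun p : Finset α × Finset α => θ ^ (p.1 ∪ p.2).card)]
  refine Finset.sum_congr rfl fun k hk => ?_
  have hterm : ∀ p ∈ (F ×ˢ F).filter (fun p => (p.1 ∩ p.2).card = k),
      θ ^ (p.1 ∪ p.2).card = θ ^ (2 * ℓ - k) := by
    intro p hp
    rw [Finset.mem_filter, Finset.mem_product] at hp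
    have hu := Finset.card_union_add_card_inter p.1 p.2
    have e1 := (hF _ hp.1.1).2
    have e2 := (hF _ hp.1.2).2
    congr 1
    omega
  rw [Finset.sum_congr rfl hterm, Finset.sum_const, nsmul_eq_mul, interPairs]

variable (U : Finset α) (θ : ℝ) (hθ0 : 0 ≤ θ) (hθ1 : θ ≤ 1)
include hθ0 hθ1

lemma w_nonneg (A : Finset α) : 0 ≤ θ ^ A.card * (1 - θ) ^ (U.card - A.card) :=
  mul_nonneg (pow_nonneg hθ0 _) (pow_nonneg (by linarith) _)

lemma pr_nonneg (E : Finset α → Prop) : 0 ≤ prRandomSubset U θ E :=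
  Finset.sum_nonneg fun A _ => by
    split
    · exact w_nonneg U θ hθ0 hθ1 A
    · exact le_rfl

lemma pr_le_one (E : Finset α → Prop) : prRandomSubset U θ E ≤ 1 := by
  rw [← sum_binom U θ]
  refine Finset.sum_le_sum fun A _ => ?_
  split
  · exact le_rfl
  · exact w_nonneg U θ hθ0 hθ1 A

lemma pr_le_EZ (F : Finset (Finset α)) :
    prRandomSubset U θ (fun A => ∃ S ∈ F, S ⊆ A) ≤
      ∑ A ∈ U.powerset, (θ ^ A.card * (1 - θ) ^ (U.card - A.card)) *
        (∑ S ∈ F, if S ⊆ A then (1:ℝ) else 0) := by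
  refine Finset.sum_le_sum fun A _ => ?_
  have hw := w_nonneg U θ hθ0 hθ1 A
  split
  · rename_i h
    obtain ⟨S, hSF, hSA⟩ := h
    have h1 : (1:ℝ) ≤ ∑ S ∈ F, if S ⊆ A then (1:ℝ) else 0 := by
      have := Finset.single_le_sum (f := fun S : Finset α => if S ⊆ A then (1:ℝ) else 0)
        (fun S _ => by positivity) hSF
      simpa [hSA] using this
    nlinarith
  · positivity

lemma PZ (F : Finset (Finset α)) :
    (∑ A ∈ U.powerset, (θ ^ A.card * (1 - θ) ^ (U.card - A.card)) *
        (∑ S ∈ F, if S ⊆ A then (1:ℝ) else 0)) ^ 2 ≤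
      prRandomSubset U θ (fun A => ∃ S ∈ F, S ⊆ A) *
      (∑ A ∈ U.powerset, (θ ^ A.card * (1 - θ) ^ (U.card - A.card)) *
        (∑ S ∈ F, if S ⊆ A then (1:ℝ) else 0) ^ 2) := by
  classical
  set E : Finset α → Prop := fun A => ∃ S ∈ F, S ⊆ A with hE
  set w : Finset α → ℝ := fun A => θ ^ A.card * (1 - θ) ^ (U.card - A.card) with hwdef
  have hw : ∀ A, 0 ≤ w A := fun A => w_nonneg U θ hθ0 hθ1 A
  set Z : Finset α → ℝ := fun A => ∑ S ∈ F, if S ⊆ A then (1:ℝ) else 0 with hZdef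
  have hZ0 : ∀ A, ¬ E A → Z A = 0 := by
    intro A hA
    refine Finset.sum_eq_zero fun S hS => ?_
    rw [if_neg fun hsub => hA ⟨S, hS, hsub⟩]
  have key := Finset.sum_mul_sq_le_sq_mul_sq U.powerset
    (fun A => @ite ℝ (E A) (Classical.propDecidable _) (Real.sqrt (w A)) 0)
    (fun A => Real.sqrt (w A) * Z A)
  have e1 : ∀ A ∈ U.powerset,
      (@ite ℝ (E A) (Classical.propDecidable _) (Real.sqrt (w A)) 0) * (Real.sqrt (w A) * Z A)
        = w A * Z A := by
    intro A _
    split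
    · rw [← mul_assoc, Real.mul_self_sqrt (hw A)]
    · rename_i h
      rw [hZ0 A h]
      simp
  have e2 : ∀ A ∈ U.powerset,
      (@ite ℝ (E A) (Classical.propDecidable _) (Real.sqrt (w A)) 0) ^ 2
        = @ite ℝ (E A) (Classical.propDecidable _) (w A) 0 := by
    intro A _
    split
    · exact Real.sq_sqrt (hw A)
    · exact zero_pow two_ne_zero
  have e3 : ∀ A ∈ U.powerset, (Real.sqrt (w A) * Z A) ^ 2 = w A * Z A ^ 2 := by
    intro A _
    rw [mul_pow, Real.sq_sqrt (hw A)]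
  rw [Finset.sum_congr rfl e1, Finset.sum_congr rfl e2, Finset.sum_congr rfl e3] at key
  exact key

end Helpers

set_option maxHeartbeats 1000000 in
theorem stmt0 (α : ℕ → Type*) [∀ i, DecidableEq (α i)]
    (U : ∀ i, Finset (α i)) (ℓ : ℕ → ℕ)
    (F : ∀ i, Finset (Finset (α i)))
    (hℓ : ∀ i, 1 ≤ ℓ i ∧ ℓ i < (U i).card)
    (hF : ∀ i, ∀ S ∈ F i, S ⊆ U i ∧ S.card = ℓ i)
    (hFtop : Tendsto (fun i => (F i).card) atTop atTop)
    (hUtop : Tendsto (fun i => (U i).card) atTop atTop)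
    (c : ℝ) (hc : 0 < c)
    (hcond : ∀ i, ∑ k ∈ Finset.Ico 1 (ℓ i),
        c ^ k * ((F i).card : ℝ) ^ ((k : ℝ) / (ℓ i : ℝ)) * ((interPairs (F i) k).card : ℝ)
        ≤ ((F i).card : ℝ) ^ 2)
    (θ : ℕ → ℝ) (hθ : ∀ i, 0 ≤ θ i ∧ θ i ≤ 1) :
    (θ =o[atTop] (fun i => ((F i).card : ℝ) ^ (-(1 : ℝ) / (ℓ i : ℝ))) →
      Tendsto (fun i => prRandomSubset (U i) (θ i) (fun A => ∃ S ∈ F i, S ⊆ A))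
        atTop (nhds 0)) ∧
    ((fun i => ((F i).card : ℝ) ^ (-(1 : ℝ) / (ℓ i : ℝ))) =o[atTop] θ →
      Tendsto (fun i => prRandomSubset (U i) (θ i) (fun A => ∃ S ∈ F i, S ⊆ A))
        atTop (nhds 1)) := by
  classical
  constructor
  · -- 0-statement
    intro hsmall
    rw [Metric.tendsto_nhds]
    intro ε hε
    set ε' : ℝ := min (ε/2) 1 with hε'def
    have hε' : 0 < ε' := lt_min (by linarith) one_pos
    filter_upwards [isLittleO_iff.mp hsmall hε', hFtop.eventually_ge_atTop 1] with i hi1 hi2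
    set n : ℝ := ((F i).card : ℝ) with hndef
    have hn1 : (1:ℝ) ≤ n := by rw [hndef]; exact_mod_cast hi2
    have hn0 : (0:ℝ) < n := by linarith
    have hL1 : 1 ≤ ℓ i := (hℓ i).1
    have hLR : (0:ℝ) < (ℓ i : ℝ) := by exact_mod_cast hL1
    set f : ℝ := n ^ (-(1 : ℝ) / (ℓ i : ℝ)) with hfdef
    have hf0 : 0 < f := Real.rpow_pos_of_pos hn0 _
    have hfpow : f ^ (ℓ i) = n⁻¹ := by
      rw [hfdef, ← Real.rpow_natCast (n ^ (-(1 : ℝ) / (ℓ i : ℝ))) (ℓ i),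
        ← Real.rpow_mul hn0.le]
      rw [show -(1 : ℝ) / (ℓ i : ℝ) * (ℓ i : ℕ) = -1 by
        field_simp]
      exact Real.rpow_neg_one n
    have hθ0 := (hθ i).1
    have hθ1 := (hθ i).2
    have hθf : θ i ≤ ε' * f := by
      have := hi1
      rwa [Real.norm_eq_abs, Real.norm_eq_abs, abs_of_nonneg hθ0, abs_of_nonneg hf0.le] at this
    have hP0 : 0 ≤ prRandomSubset (U i) (θ i) (fun A => ∃ S ∈ F i, S ⊆ A) :=
      pr_nonneg (U i) (θ i) hθ0 hθ1 _
    have hPle : prRandomSubset (U i) (θ i) (fun A => ∃ S ∈ F i, S ⊆ A) ≤ n * θ i ^ (ℓ i) := by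
      have h1 := pr_le_EZ (U i) (θ i) hθ0 hθ1 (F i)
      rwa [EZ_eq (U i) (F i) (ℓ i) (θ i) (hF i)] at h1
    have hsmallpow : n * θ i ^ (ℓ i) ≤ ε' ^ (ℓ i) := by
      have h2 : θ i ^ (ℓ i) ≤ (ε' * f) ^ (ℓ i) := pow_le_pow_left₀ hθ0 hθf _
      have h3 : (ε' * f) ^ (ℓ i) = ε' ^ (ℓ i) * n⁻¹ := by rw [mul_pow, hfpow]
      calc n * θ i ^ (ℓ i) ≤ n * (ε' ^ (ℓ i) * n⁻¹) := by
            rw [← h3]; exact mul_le_mul_of_nonneg_left h2 hn0.le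
        _ = ε' ^ (ℓ i) * (n * n⁻¹) := by ring
        _ = ε' ^ (ℓ i) := by rw [mul_inv_cancel₀ hn0.ne', mul_one]
    have hεℓ : ε' ^ (ℓ i) ≤ ε' :=
      pow_le_of_le_one hε'.le (min_le_right _ _) (by omega)
    rw [Real.dist_eq, sub_zero, abs_of_nonneg hP0]
    have : ε' ≤ ε / 2 := min_le_left _ _
    linarith
  · -- 1-statement
    intro hbig
    rw [Metric.tendsto_nhds]
    intro ε hε
    set δ : ℝ := min (ε/3) 1 with hδdef
    have hδ0 : 0 < δ := lt_min (by linarith) one_pos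
    have hδ1 : δ ≤ 1 := min_le_right _ _
    have hδε : δ ≤ ε / 3 := min_le_left _ _
    set M : ℝ := max 1 (max (1/δ) (1/(δ*c))) with hMdef
    have hM1 : (1:ℝ) ≤ M := le_max_left _ _
    have hM0 : (0:ℝ) < M := by linarith
    have hMδ : 1/δ ≤ M := le_trans (le_max_left _ _) (le_max_right _ _)
    have hMδc : 1/(δ*c) ≤ M := le_trans (le_max_right _ _) (le_max_right _ _)
    have hcM1 : (1:ℝ) ≤ c * M := by
      have hδc : 0 < δ * c := mul_pos hδ0 hc
      rw [div_le_iff₀ hδc] at hMδc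
      nlinarith
    have hδcM : (1:ℝ) ≤ δ * (c * M) := by
      have hδc : 0 < δ * c := mul_pos hδ0 hc
      rw [div_le_iff₀ hδc] at hMδc
      nlinarith
    filter_upwards [isLittleO_iff.mp hbig (show (0:ℝ) < 1/M by positivity),
      hFtop.eventually_ge_atTop 1] with i hi1 hi2
    set n : ℝ := ((F i).card : ℝ) with hndef
    have hn1 : (1:ℝ) ≤ n := by rw [hndef]; exact_mod_cast hi2
    have hn0 : (0:ℝ) < n := by linarith
    have hL1 : 1 ≤ ℓ i := (hℓ i).1
    have hLR : (0:ℝ) < (ℓ i : ℝ) := by exact_mod_cast hL1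
    set f : ℝ := n ^ (-(1 : ℝ) / (ℓ i : ℝ)) with hfdef
    have hf0 : 0 < f := Real.rpow_pos_of_pos hn0 _
    have hfpow : f ^ (ℓ i) = n⁻¹ := by
      rw [hfdef, ← Real.rpow_natCast (n ^ (-(1 : ℝ) / (ℓ i : ℝ))) (ℓ i),
        ← Real.rpow_mul hn0.le]
      rw [show -(1 : ℝ) / (ℓ i : ℝ) * (ℓ i : ℕ) = -1 by field_simp]
      exact Real.rpow_neg_one n
    have hθ0 := (hθ i).1
    have hθ1 := (hθ i).2
    have hθf : M * f ≤ θ i := by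
      rw [Real.norm_eq_abs, Real.norm_eq_abs, abs_of_nonneg hθ0, abs_of_nonneg hf0.le] at hi1
      rw [← le_div_iff₀' hM0]
      calc f ≤ 1/M * θ i := hi1
        _ = θ i / M := by ring
    have hθpos : 0 < θ i := lt_of_lt_of_le (by positivity) hθf
    set P : ℝ := prRandomSubset (U i) (θ i) (fun A => ∃ S ∈ F i, S ⊆ A) with hPdef
    have hP0 : 0 ≤ P := pr_nonneg (U i) (θ i) hθ0 hθ1 _
    have hP1 : P ≤ 1 := pr_le_one (U i) (θ i) hθ0 hθ1 _
    set L : ℕ := ℓ i with hLdef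
    set e : ℝ := n * θ i ^ L with hedef
    have he0 : 0 < e := by positivity
    -- e ≥ M ≥ 1/δ
    have heM : M ≤ e := by
      have h2 : (M * f) ^ L ≤ θ i ^ L := pow_le_pow_left₀ (by positivity) hθf _
      have h3 : (M * f) ^ L = M ^ L * n⁻¹ := by rw [mul_pow, hfpow]
      have h4 : M ^ L * (n * n⁻¹) ≤ e := by
        rw [hedef]
        calc M ^ L * (n * n⁻¹) = n * (M ^ L * n⁻¹) := by ring
          _ = n * (M * f) ^ L := by rw [h3]
          _ ≤ n * θ i ^ L := mul_le_mul_of_nonneg_left h2 hn0.le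
      rw [mul_inv_cancel₀ hn0.ne', mul_one] at h4
      exact le_trans (le_self_pow₀ hM1 (by omega)) h4
    have heδ : 1 ≤ δ * e := by
      rw [div_le_iff₀ hδ0] at hMδ
      nlinarith
    -- second moment bound
    have hPZ : e ^ 2 ≤ P * (∑ k ∈ Finset.range (L+1),
        ((interPairs (F i) k).card : ℝ) * θ i ^ (2*L - k)) := by
      have h := PZ (U i) (θ i) hθ0 hθ1 (F i)
      rwa [EZ_eq (U i) (F i) (ℓ i) (θ i) (hF i),
        EZsq_eq (U i) (F i) (ℓ i) (θ i) (hF i)] at h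
    -- bound the sum by (1 + 2δ) e^2
    have hsplit : ∑ k ∈ Finset.range (L+1),
        ((interPairs (F i) k).card : ℝ) * θ i ^ (2*L - k)
        = ((interPairs (F i) 0).card : ℝ) * θ i ^ (2*L) +
          (∑ k ∈ Finset.Ico 1 L, ((interPairs (F i) k).card : ℝ) * θ i ^ (2*L - k)) +
          ((interPairs (F i) L).card : ℝ) * θ i ^ L := by
      rw [Finset.sum_range_succ, Finset.range_eq_Ico,
        Finset.sum_eq_sum_Ico_succ_bot (by omega : 0 < L),
        show 2*L - 0 = 2*L by omega, show 2*L - L = L by omega]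
    have hI0 : ((interPairs (F i) 0).card : ℝ) ≤ n ^ 2 := by
      have h1 : (interPairs (F i) 0).card ≤ (F i ×ˢ F i).card :=
        Finset.card_filter_le _ _
      rw [Finset.card_product] at h1
      rw [hndef, sq]
      exact_mod_cast h1
    have hIL : ((interPairs (F i) L).card : ℝ) ≤ n := by
      have hinj : ∀ p ∈ interPairs (F i) L, p.1 = p.2 := by
        intro p hp
        rw [interPairs, Finset.mem_filter, Finset.mem_product] at hp
        have e1 := (hF i _ hp.1.1).2
        have e2 := (hF i _ hp.1.2).2
        have s1 : p.1 ∩ p.2 = p.1 :=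
          Finset.eq_of_subset_of_card_le Finset.inter_subset_left (by omega)
        have s2 : p.1 ∩ p.2 = p.2 :=
          Finset.eq_of_subset_of_card_le Finset.inter_subset_right (by omega)
        rw [← s1, s2]
      have hcard : (interPairs (F i) L).card ≤ (F i).card := by
        refine Finset.card_le_card_of_injOn Prod.fst ?_ ?_
        · intro p hp
          rw [interPairs, Finset.mem_coe, Finset.mem_filter, Finset.mem_product] at hp
          exact hp.1.1
        · intro p hp q hq hpq
          have := hinj p hp
          have := hinj q hq
          exact Prod.ext hpq (by rw [← hinj p hp, ← hinj q hq, hpq])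
      rw [hndef]
      exact_mod_cast hcard
    have hθL0 : (0:ℝ) ≤ θ i ^ (2*L) := by positivity
    have hmid : ∑ k ∈ Finset.Ico 1 L, ((interPairs (F i) k).card : ℝ) * θ i ^ (2*L - k)
        ≤ δ * e ^ 2 := by
      have hterm : ∀ k ∈ Finset.Ico 1 L,
          ((interPairs (F i) k).card : ℝ) * θ i ^ (2*L - k)
          ≤ δ * θ i ^ (2*L) * (c ^ k * n ^ ((k:ℝ)/(L:ℝ)) * ((interPairs (F i) k).card : ℝ)) := by
        intro k hk
        rw [Finset.mem_Ico] at hk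
        have hk1 : 1 ≤ k := hk.1
        have hk2L : k ≤ 2 * L := by omega
        set r : ℝ := n ^ ((k:ℝ)/(L:ℝ)) with hrdef
        have hr0 : 0 < r := Real.rpow_pos_of_pos hn0 _
        have hfk : f ^ k = r⁻¹ := by
          rw [hfdef, ← Real.rpow_natCast (n ^ (-(1 : ℝ) / (ℓ i : ℝ))) k,
            ← Real.rpow_mul hn0.le, hrdef, ← Real.rpow_neg hn0.le]
          congr 1
          rw [hLdef]
          field_simp
        have hθk : M ^ k * r⁻¹ ≤ θ i ^ k := by
          have := pow_le_pow_left₀ (by positivity) hθf k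
          rwa [mul_pow, hfk] at this
        have h5 : 1 ≤ δ * c ^ k * r * θ i ^ k := by
          have hck : (0:ℝ) < c ^ k := by positivity
          have step1 : δ * (c * M) ≤ δ * (c * M) ^ k :=
            mul_le_mul_of_nonneg_left (le_self_pow₀ hcM1 (by omega)) hδ0.le
          have hrr : r * r⁻¹ = 1 := mul_inv_cancel₀ hr0.ne'
          have step2 : δ * (c * M) ^ k = δ * c ^ k * r * (M ^ k * r⁻¹) := by
            have : δ * c ^ k * r * (M ^ k * r⁻¹) = δ * c ^ k * M ^ k * (r * r⁻¹) := by ring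
            rw [this, hrr, mul_pow]
            ring
          have step3 : δ * c ^ k * r * (M ^ k * r⁻¹) ≤ δ * c ^ k * r * θ i ^ k :=
            mul_le_mul_of_nonneg_left hθk (by positivity)
          linarith [hδcM]
        have h6 : θ i ^ (2*L - k) ≤ δ * c ^ k * r * θ i ^ (2*L) := by
          calc θ i ^ (2*L - k) = 1 * θ i ^ (2*L - k) := (one_mul _).symm
            _ ≤ (δ * c ^ k * r * θ i ^ k) * θ i ^ (2*L - k) :=
              mul_le_mul_of_nonneg_right h5 (by positivity)
            _ = δ * c ^ k * r * (θ i ^ (2*L - k) * θ i ^ k) := by ring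
            _ = δ * c ^ k * r * θ i ^ (2*L) := by rw [pow_sub_mul_pow _ hk2L]
        calc ((interPairs (F i) k).card : ℝ) * θ i ^ (2*L - k)
            ≤ ((interPairs (F i) k).card : ℝ) * (δ * c ^ k * r * θ i ^ (2*L)) :=
              mul_le_mul_of_nonneg_left h6 (Nat.cast_nonneg _)
          _ = δ * θ i ^ (2*L) * (c ^ k * r * ((interPairs (F i) k).card : ℝ)) := by ring
      calc ∑ k ∈ Finset.Ico 1 L, ((interPairs (F i) k).card : ℝ) * θ i ^ (2*L - k)
          ≤ ∑ k ∈ Finset.Ico 1 L,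
            δ * θ i ^ (2*L) * (c ^ k * n ^ ((k:ℝ)/(L:ℝ)) * ((interPairs (F i) k).card : ℝ)) :=
            Finset.sum_le_sum hterm
        _ = δ * θ i ^ (2*L) * ∑ k ∈ Finset.Ico 1 L,
            c ^ k * n ^ ((k:ℝ)/(L:ℝ)) * ((interPairs (F i) k).card : ℝ) := by
            rw [Finset.mul_sum]
        _ ≤ δ * θ i ^ (2*L) * n ^ 2 := by
            refine mul_le_mul_of_nonneg_left ?_ (by positivity)
            exact hcond i
        _ = δ * e ^ 2 := by
            rw [hedef, mul_pow, ← pow_mul, Nat.mul_comm L 2]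
            ring
    have hQ : ∑ k ∈ Finset.range (L+1),
        ((interPairs (F i) k).card : ℝ) * θ i ^ (2*L - k) ≤ (1 + 2*δ) * e ^ 2 := by
      rw [hsplit]
      have ht0 : ((interPairs (F i) 0).card : ℝ) * θ i ^ (2*L) ≤ e ^ 2 := by
        have : e ^ 2 = n ^ 2 * θ i ^ (2*L) := by
          rw [hedef, mul_pow, ← pow_mul, Nat.mul_comm L 2]
        rw [this]
        exact mul_le_mul_of_nonneg_right hI0 hθL0
      have htL : ((interPairs (F i) L).card : ℝ) * θ i ^ L ≤ e := by
        rw [hedef]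
        exact mul_le_mul_of_nonneg_right hIL (by positivity)
      have heδ2 : e ≤ δ * e ^ 2 := by nlinarith
      linarith
    -- conclude
    have h6 : e ^ 2 ≤ P * ((1 + 2*δ) * e ^ 2) :=
      le_trans hPZ (mul_le_mul_of_nonneg_left hQ hP0)
    have h7 : 1 ≤ P * (1 + 2*δ) := by
      have he2 : (0:ℝ) < e ^ 2 := by positivity
      nlinarith
    rw [Real.dist_eq, abs_of_nonpos (by linarith)]
    have : 1 - P ≤ 2*δ := by nlinarith
    linarith
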